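/- The series $R(x,y,q) = \sum_{i,j,k,\ell \ge 0} x^{2j+k+\ell} y^{i+j+k} q^{2i^2 + 6ij + 4ik + 2i\ell + 6j^2 + 8jk + 4j\ell + 3k^2 + 3k\ell + \ell^2} / ((q^2;q^2)_i (q^2;q^2)_j (q;q)_k (q;q)_\ell)$ satisfies the functional equation $R(x,y,q) = R(xq,y,q) + xq\, R(xq^2,y,q)$. -/

import Mathlib

noncomputable instance : TopologicalSpace (MvPowerSeries (Fin 3) ℚ) := Pi.topologicalSpace

open MvPowerSeries

/-- `(q^a; q^b)_n` where `q` is the third variable. -/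
noncomputable def poch (a b n : ℕ) : MvPowerSeries (Fin 3) ℚ :=
  ∏ t ∈ Finset.range n, (1 - (X 2 : MvPowerSeries (Fin 3) ℚ) ^ (a + b * t))

/-- The two-variable series `R(x,y,q)`, as a function of the series substituted for `x`
and `y`, with `q` the third variable. -/
noncomputable def R (x y : MvPowerSeries (Fin 3) ℚ) : MvPowerSeries (Fin 3) ℚ :=
  ∑' p : ℕ × ℕ × ℕ × ℕ,
    x ^ (2*p.2.1 + p.2.2.1 + p.2.2.2) * y ^ (p.1 + p.2.1 + p.2.2.1) *
      (X 2 : MvPowerSeries (Fin 3) ℚ) ^ (2*p.1^2 + 6*p.1*p.2.1 + 4*p.1*p.2.2.1 + 2*p.1*p.2.2.2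
        + 6*p.2.1^2 + 8*p.2.1*p.2.2.1 + 4*p.2.1*p.2.2.2
        + 3*p.2.2.1^2 + 3*p.2.2.1*p.2.2.2 + p.2.2.2^2) *
      (poch 2 2 p.1 * poch 2 2 p.2.1 * poch 1 1 p.2.2.1 * poch 1 1 p.2.2.2)⁻¹

instance : T2Space (MvPowerSeries (Fin 3) ℚ) := inferInstanceAs (T2Space ((Fin 3 →₀ ℕ) → ℚ))
instance : IsTopologicalAddGroup (MvPowerSeries (Fin 3) ℚ) :=
  inferInstanceAs (IsTopologicalAddGroup ((Fin 3 →₀ ℕ) → ℚ))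

abbrev P4 := ℕ × ℕ × ℕ × ℕ

lemma hasSum_iff_coeff {f : P4 → MvPowerSeries (Fin 3) ℚ} {g : MvPowerSeries (Fin 3) ℚ} :
    HasSum f g ↔ ∀ d, HasSum (fun p => coeff d (f p)) (coeff d g) := Pi.hasSum

lemma coeff_tsum {f : P4 → MvPowerSeries (Fin 3) ℚ} (hf : Summable f) (d : Fin 3 →₀ ℕ) :
    coeff d (∑' p, f p) = ∑' p, coeff d (f p) := tsum_apply hf

lemma poch_succ (a b n : ℕ) :
    poch a b (n+1) = poch a b n * (1 - (X 2 : MvPowerSeries (Fin 3) ℚ) ^ (a + b * n)) :=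
  Finset.prod_range_succ _ _

lemma constantCoeff_one_sub_X_pow (e : ℕ) (he : e ≠ 0) :
    constantCoeff (1 - (X 2 : MvPowerSeries (Fin 3) ℚ) ^ e) = 1 := by
  simp [map_sub, map_pow, constantCoeff_X, zero_pow he]

lemma constantCoeff_poch (a b n : ℕ) (ha : a ≠ 0) :
    constantCoeff (poch a b n) = 1 := by
  induction n with
  | zero => simp [poch]
  | succ n ih =>
      rw [poch_succ, map_mul, ih, constantCoeff_one_sub_X_pow _ (by positivity), mul_one]

noncomputable def Dden (p : P4) : MvPowerSeries (Fin 3) ℚ :=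
  poch 2 2 p.1 * poch 2 2 p.2.1 * poch 1 1 p.2.2.1 * poch 1 1 p.2.2.2

lemma constantCoeff_Dden (p : P4) : constantCoeff (Dden p) = 1 := by
  simp [Dden, map_mul, constantCoeff_poch _ _ _ one_ne_zero,
    constantCoeff_poch _ _ _ two_ne_zero]

noncomputable def T (a b c : P4 → ℕ) (p : P4) : MvPowerSeries (Fin 3) ℚ :=
  X 0 ^ a p * X 1 ^ b p * X 2 ^ c p * (Dden p)⁻¹

noncomputable def S (a b c : P4 → ℕ) : MvPowerSeries (Fin 3) ℚ := ∑' p, T a b c p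

def G (a b : P4 → ℕ) : Prop :=
  ∀ p : P4, p.1 ≤ b p ∧ p.2.1 ≤ b p ∧ p.2.2.1 ≤ b p ∧ p.2.2.2 ≤ a p

lemma coeff_T_zero (a b c : P4 → ℕ) (p : P4) (d : Fin 3 →₀ ℕ)
    (h : d 0 < a p ∨ d 1 < b p) : coeff d (T a b c p) = 0 := by
  rw [T, X_pow_eq, X_pow_eq, X_pow_eq, monomial_mul_monomial, monomial_mul_monomial,
    coeff_monomial_mul, if_neg]
  intro hle
  rcases h with h | h
  · have := Finsupp.le_def.mp hle 0
    simp [Finsupp.add_apply, Finsupp.single_apply] at this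
    omega
  · have := Finsupp.le_def.mp hle 1
    simp [Finsupp.add_apply, Finsupp.single_apply] at this
    omega

lemma summable_T (a b c : P4 → ℕ) (hG : G a b) : Summable (T a b c) := by
  rw [show Summable (T a b c) ↔ _ from Pi.summable]
  intro d
  apply summable_of_ne_finset_zero
    (s := (Finset.range (d 1 + 1)) ×ˢ ((Finset.range (d 1 + 1)) ×ˢ
      ((Finset.range (d 1 + 1)) ×ˢ (Finset.range (d 0 + 1)))))
  intro p hp
  show coeff d (T a b c p) = 0
  simp only [Finset.mem_product, Finset.mem_range] at hp
  have h := hG p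
  apply coeff_T_zero
  omega

-- generic cancellation
lemma inv_mul_cancel_right' (w v : MvPowerSeries (Fin 3) ℚ)
    (hv : constantCoeff v ≠ 0) : (w * v)⁻¹ * v = w⁻¹ := by
  rw [MvPowerSeries.mul_inv_rev, mul_comm v⁻¹ w⁻¹, mul_assoc,
    MvPowerSeries.inv_mul_cancel v hv, mul_one]

lemma one_sub_X_pow_ne (e : ℕ) (he : e ≠ 0) :
    constantCoeff (1 - (X 2 : MvPowerSeries (Fin 3) ℚ) ^ e) ≠ 0 := by
  rw [constantCoeff_one_sub_X_pow e he]; exact one_ne_zero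

lemma Dinv_l (i j k l : ℕ) :
    (Dden (i,j,k,l+1))⁻¹ * (1 - (X 2 : MvPowerSeries (Fin 3) ℚ) ^ (l+1)) = (Dden (i,j,k,l))⁻¹ := by
  have h : Dden (i,j,k,l+1) = Dden (i,j,k,l) * (1 - (X 2 : MvPowerSeries (Fin 3) ℚ) ^ (l+1)) := by
    show poch 2 2 i * poch 2 2 j * poch 1 1 k * poch 1 1 (l+1) = _
    rw [poch_succ, show 1 + 1*l = l+1 by ring, Dden]; ring
  rw [h, inv_mul_cancel_right' _ _ (one_sub_X_pow_ne _ (by omega))]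

lemma Dinv_k (i j k l : ℕ) :
    (Dden (i,j,k+1,l))⁻¹ * (1 - (X 2 : MvPowerSeries (Fin 3) ℚ) ^ (k+1)) = (Dden (i,j,k,l))⁻¹ := by
  have h : Dden (i,j,k+1,l) = Dden (i,j,k,l) * (1 - (X 2 : MvPowerSeries (Fin 3) ℚ) ^ (k+1)) := by
    show poch 2 2 i * poch 2 2 j * poch 1 1 (k+1) * poch 1 1 l = _
    rw [poch_succ, show 1 + 1*k = k+1 by ring, Dden]; ring
  rw [h, inv_mul_cancel_right' _ _ (one_sub_X_pow_ne _ (by omega))]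

lemma Dinv_j (i j k l : ℕ) :
    (Dden (i,j+1,k,l))⁻¹ * (1 - (X 2 : MvPowerSeries (Fin 3) ℚ) ^ (2*j+2)) = (Dden (i,j,k,l))⁻¹ := by
  have h : Dden (i,j+1,k,l) = Dden (i,j,k,l) * (1 - (X 2 : MvPowerSeries (Fin 3) ℚ) ^ (2*j+2)) := by
    show poch 2 2 i * poch 2 2 (j+1) * poch 1 1 k * poch 1 1 l = _
    rw [poch_succ, show 2 + 2*j = 2*j+2 by ring, Dden]; ring
  rw [h, inv_mul_cancel_right' _ _ (one_sub_X_pow_ne _ (by omega))]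

lemma Dinv_i (i j k l : ℕ) :
    (Dden (i+1,j,k,l))⁻¹ * (1 - (X 2 : MvPowerSeries (Fin 3) ℚ) ^ (2*i+2)) = (Dden (i,j,k,l))⁻¹ := by
  have h : Dden (i+1,j,k,l) = Dden (i,j,k,l) * (1 - (X 2 : MvPowerSeries (Fin 3) ℚ) ^ (2*i+2)) := by
    show poch 2 2 (i+1) * poch 2 2 j * poch 1 1 k * poch 1 1 l = _
    rw [poch_succ, show 2 + 2*i = 2*i+2 by ring, Dden]; ring
  rw [h, inv_mul_cancel_right' _ _ (one_sub_X_pow_ne _ (by omega))]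

def sigl (p : P4) : P4 := (p.1, p.2.1, p.2.2.1, p.2.2.2 + 1)
def sigk (p : P4) : P4 := (p.1, p.2.1, p.2.2.1 + 1, p.2.2.2)
def sigj (p : P4) : P4 := (p.1, p.2.1 + 1, p.2.2.1, p.2.2.2)
def sigi (p : P4) : P4 := (p.1 + 1, p.2.1, p.2.2.1, p.2.2.2)

lemma step_l (a b c : P4 → ℕ) (hG : G a b) :
    S a b c - S a b (fun p => c p + p.2.2.2) =
      S (fun p => a (sigl p)) (fun p => b (sigl p)) (fun p => c (sigl p)) := by
  have h1 := summable_T a b c hG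
  have h2 := summable_T a b (fun p => c p + p.2.2.2) hG
  rw [S, S, S, ← Summable.tsum_sub h1 h2]
  have hinj : Function.Injective sigl := by
    rintro ⟨i,j,k,l⟩ ⟨i',j',k',l'⟩ h
    simp only [sigl, Prod.mk.injEq] at h
    obtain ⟨h1,h2,h3,h4⟩ := h
    simp_all
  have hsupp : Function.support
      (fun p => T a b c p - T a b (fun q => c q + q.2.2.2) p) ⊆ Set.range sigl := by
    rintro ⟨i,j,k,l⟩ hp
    rcases l with _ | n
    · exfalso; apply hp; simp [T]
    · exact ⟨(i,j,k,n), rfl⟩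
  rw [← hinj.tsum_eq hsupp]
  apply tsum_congr
  rintro ⟨i,j,k,l⟩
  have hD := Dinv_l i j k l
  simp only [T, sigl]
  rw [pow_add]
  linear_combination (X 0 ^ (a (i,j,k,l+1)) * X 1 ^ (b (i,j,k,l+1)) *
    X 2 ^ (c (i,j,k,l+1))) * hD

lemma step_k (a b c : P4 → ℕ) (hG : G a b) :
    S a b c - S a b (fun p => c p + p.2.2.1) =
      S (fun p => a (sigk p)) (fun p => b (sigk p)) (fun p => c (sigk p)) := by
  have h1 := summable_T a b c hG
  have h2 := summable_T a b (fun p => c p + p.2.2.1) hG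
  rw [S, S, S, ← Summable.tsum_sub h1 h2]
  have hinj : Function.Injective sigk := by
    rintro ⟨i,j,k,l⟩ ⟨i',j',k',l'⟩ h
    simp only [sigk, Prod.mk.injEq] at h
    obtain ⟨h1,h2,h3,h4⟩ := h
    simp_all
  have hsupp : Function.support
      (fun p => T a b c p - T a b (fun q => c q + q.2.2.1) p) ⊆ Set.range sigk := by
    rintro ⟨i,j,k,l⟩ hp
    rcases k with _ | n
    · exfalso; apply hp; simp [T]
    · exact ⟨(i,j,n,l), rfl⟩
  rw [← hinj.tsum_eq hsupp]
  apply tsum_congr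
  rintro ⟨i,j,k,l⟩
  have hD := Dinv_k i j k l
  simp only [T, sigk]
  rw [pow_add]
  linear_combination (X 0 ^ (a (i,j,k+1,l)) * X 1 ^ (b (i,j,k+1,l)) *
    X 2 ^ (c (i,j,k+1,l))) * hD

lemma step_j (a b c : P4 → ℕ) (hG : G a b) :
    S a b c - S a b (fun p => c p + 2*p.2.1) =
      S (fun p => a (sigj p)) (fun p => b (sigj p)) (fun p => c (sigj p)) := by
  have h1 := summable_T a b c hG
  have h2 := summable_T a b (fun p => c p + 2*p.2.1) hG
  rw [S, S, S, ← Summable.tsum_sub h1 h2]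
  have hinj : Function.Injective sigj := by
    rintro ⟨i,j,k,l⟩ ⟨i',j',k',l'⟩ h
    simp only [sigj, Prod.mk.injEq] at h
    obtain ⟨h1,h2,h3,h4⟩ := h
    simp_all
  have hsupp : Function.support
      (fun p => T a b c p - T a b (fun q => c q + 2*q.2.1) p) ⊆ Set.range sigj := by
    rintro ⟨i,j,k,l⟩ hp
    rcases j with _ | n
    · exfalso; apply hp; simp [T]
    · exact ⟨(i,n,k,l), rfl⟩
  rw [← hinj.tsum_eq hsupp]
  apply tsum_congr
  rintro ⟨i,j,k,l⟩
  have hD := Dinv_j i j k l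
  simp only [T, sigj]
  rw [show 2*(j+1) = (2*j+2) by ring, pow_add]
  linear_combination (X 0 ^ (a (i,j+1,k,l)) * X 1 ^ (b (i,j+1,k,l)) *
    X 2 ^ (c (i,j+1,k,l))) * hD

lemma step_i (a b c : P4 → ℕ) (hG : G a b) :
    S a b c - S a b (fun p => c p + 2*p.1) =
      S (fun p => a (sigi p)) (fun p => b (sigi p)) (fun p => c (sigi p)) := by
  have h1 := summable_T a b c hG
  have h2 := summable_T a b (fun p => c p + 2*p.1) hG
  rw [S, S, S, ← Summable.tsum_sub h1 h2]
  have hinj : Function.Injective sigi := by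
    rintro ⟨i,j,k,l⟩ ⟨i',j',k',l'⟩ h
    simp only [sigi, Prod.mk.injEq] at h
    obtain ⟨h1,h2,h3,h4⟩ := h
    simp_all
  have hsupp : Function.support
      (fun p => T a b c p - T a b (fun q => c q + 2*q.1) p) ⊆ Set.range sigi := by
    rintro ⟨i,j,k,l⟩ hp
    rcases i with _ | n
    · exfalso; apply hp; simp [T]
    · exact ⟨(n,j,k,l), rfl⟩
  rw [← hinj.tsum_eq hsupp]
  apply tsum_congr
  rintro ⟨i,j,k,l⟩
  have hD := Dinv_i i j k l
  simp only [T, sigi]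
  rw [show 2*(i+1) = (2*i+2) by ring, pow_add]
  linear_combination (X 0 ^ (a (i+1,j,k,l)) * X 1 ^ (b (i+1,j,k,l)) *
    X 2 ^ (c (i+1,j,k,l))) * hD

def fa (u : ℕ) : P4 → ℕ := fun p => 2*p.2.1 + p.2.2.1 + p.2.2.2 + u
def fb (v : ℕ) : P4 → ℕ := fun p => p.1 + p.2.1 + p.2.2.1 + v
def fc (c1 c2 c3 c4 c5 : ℕ) : P4 → ℕ := fun p =>
  2*p.1^2 + 6*p.1*p.2.1 + 4*p.1*p.2.2.1 + 2*p.1*p.2.2.2 + 6*p.2.1^2 + 8*p.2.1*p.2.2.1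
  + 4*p.2.1*p.2.2.2 + 3*p.2.2.1^2 + 3*p.2.2.1*p.2.2.2 + p.2.2.2^2
  + c1*p.1 + c2*p.2.1 + c3*p.2.2.1 + c4*p.2.2.2 + c5

lemma hGfab (u v : ℕ) : G (fa u) (fb v) := by
  intro p; simp only [fa, fb]; omega

lemma S_congr {a b c a' b' c' : P4 → ℕ} (h1 : ∀ p, a p = a' p) (h2 : ∀ p, b p = b' p)
    (h3 : ∀ p, c p = c' p) : S a b c = S a' b' c' :=
  tsum_congr fun p => by simp only [T, h1 p, h2 p, h3 p]

lemma S_ext {u u' v v' c1 c1' c2 c2' c3 c3' c4 c4' c5 c5' : ℕ}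
    (h1 : u = u') (h2 : v = v') (h3 : c1 = c1') (h4 : c2 = c2') (h5 : c3 = c3')
    (h6 : c4 = c4') (h7 : c5 = c5') :
    S (fa u) (fb v) (fc c1 c2 c3 c4 c5) = S (fa u') (fb v') (fc c1' c2' c3' c4' c5') := by
  subst h1 h2 h3 h4 h5 h6 h7; rfl

lemma STEP_L (u v ci cj ck cl c0 : ℕ) :
    S (fa u) (fb v) (fc ci cj ck cl c0) - S (fa u) (fb v) (fc ci cj ck (cl+1) c0)
      = S (fa (u+1)) (fb v) (fc (ci+2) (cj+4) (ck+3) (cl+2) (c0+cl+1)) := by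
  have h := step_l (fa u) (fb v) (fc ci cj ck cl c0) (hGfab u v)
  have e1 : S (fa u) (fb v) (fun p => fc ci cj ck cl c0 p + p.2.2.2)
      = S (fa u) (fb v) (fc ci cj ck (cl+1) c0) :=
    S_congr (fun _ => rfl) (fun _ => rfl) (fun p => by simp only [fc]; ring)
  have e2 : S (fun p => fa u (sigl p)) (fun p => fb v (sigl p))
        (fun p => fc ci cj ck cl c0 (sigl p))
      = S (fa (u+1)) (fb v) (fc (ci+2) (cj+4) (ck+3) (cl+2) (c0+cl+1)) :=
    S_congr (fun p => by rcases p with ⟨i,j,k,l⟩; simp only [fa, sigl]; ring)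
            (fun p => by rcases p with ⟨i,j,k,l⟩; simp only [fb, sigl])
            (fun p => by rcases p with ⟨i,j,k,l⟩; simp only [fc, sigl]; ring)
  rw [← e1, ← e2]; exact h

lemma STEP_K (u v ci cj ck cl c0 : ℕ) :
    S (fa u) (fb v) (fc ci cj ck cl c0) - S (fa u) (fb v) (fc ci cj (ck+1) cl c0)
      = S (fa (u+1)) (fb (v+1)) (fc (ci+4) (cj+8) (ck+6) (cl+3) (c0+ck+3)) := by
  have h := step_k (fa u) (fb v) (fc ci cj ck cl c0) (hGfab u v)
  have e1 : S (fa u) (fb v) (fun p => fc ci cj ck cl c0 p + p.2.2.1)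
      = S (fa u) (fb v) (fc ci cj (ck+1) cl c0) :=
    S_congr (fun _ => rfl) (fun _ => rfl) (fun p => by simp only [fc]; ring)
  have e2 : S (fun p => fa u (sigk p)) (fun p => fb v (sigk p))
        (fun p => fc ci cj ck cl c0 (sigk p))
      = S (fa (u+1)) (fb (v+1)) (fc (ci+4) (cj+8) (ck+6) (cl+3) (c0+ck+3)) :=
    S_congr (fun p => by rcases p with ⟨i,j,k,l⟩; simp only [fa, sigk]; ring)
            (fun p => by rcases p with ⟨i,j,k,l⟩; simp only [fb, sigk]; ring)
            (fun p => by rcases p with ⟨i,j,k,l⟩; simp only [fc, sigk]; ring)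
  rw [← e1, ← e2]; exact h

lemma STEP_J (u v ci cj ck cl c0 : ℕ) :
    S (fa u) (fb v) (fc ci cj ck cl c0) - S (fa u) (fb v) (fc ci (cj+2) ck cl c0)
      = S (fa (u+2)) (fb (v+1)) (fc (ci+6) (cj+12) (ck+8) (cl+4) (c0+cj+6)) := by
  have h := step_j (fa u) (fb v) (fc ci cj ck cl c0) (hGfab u v)
  have e1 : S (fa u) (fb v) (fun p => fc ci cj ck cl c0 p + 2*p.2.1)
      = S (fa u) (fb v) (fc ci (cj+2) ck cl c0) :=
    S_congr (fun _ => rfl) (fun _ => rfl) (fun p => by simp only [fc]; ring)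
  have e2 : S (fun p => fa u (sigj p)) (fun p => fb v (sigj p))
        (fun p => fc ci cj ck cl c0 (sigj p))
      = S (fa (u+2)) (fb (v+1)) (fc (ci+6) (cj+12) (ck+8) (cl+4) (c0+cj+6)) :=
    S_congr (fun p => by rcases p with ⟨i,j,k,l⟩; simp only [fa, sigj]; ring)
            (fun p => by rcases p with ⟨i,j,k,l⟩; simp only [fb, sigj]; ring)
            (fun p => by rcases p with ⟨i,j,k,l⟩; simp only [fc, sigj]; ring)
  rw [← e1, ← e2]; exact h

lemma STEP_I (u v ci cj ck cl c0 : ℕ) :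
    S (fa u) (fb v) (fc ci cj ck cl c0) - S (fa u) (fb v) (fc (ci+2) cj ck cl c0)
      = S (fa u) (fb (v+1)) (fc (ci+4) (cj+6) (ck+4) (cl+2) (c0+ci+2)) := by
  have h := step_i (fa u) (fb v) (fc ci cj ck cl c0) (hGfab u v)
  have e1 : S (fa u) (fb v) (fun p => fc ci cj ck cl c0 p + 2*p.1)
      = S (fa u) (fb v) (fc (ci+2) cj ck cl c0) :=
    S_congr (fun _ => rfl) (fun _ => rfl) (fun p => by simp only [fc]; ring)
  have e2 : S (fun p => fa u (sigi p)) (fun p => fb v (sigi p))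
        (fun p => fc ci cj ck cl c0 (sigi p))
      = S (fa u) (fb (v+1)) (fc (ci+4) (cj+6) (ck+4) (cl+2) (c0+ci+2)) :=
    S_congr (fun p => by rcases p with ⟨i,j,k,l⟩; simp only [fa, sigi])
            (fun p => by rcases p with ⟨i,j,k,l⟩; simp only [fb, sigi]; ring)
            (fun p => by rcases p with ⟨i,j,k,l⟩; simp only [fc, sigi]; ring)
  rw [← e1, ← e2]; exact h

lemma hasSum_mul_left (w : MvPowerSeries (Fin 3) ℚ) {f : P4 → MvPowerSeries (Fin 3) ℚ}
    {s : MvPowerSeries (Fin 3) ℚ} (hf : HasSum f s) :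
    HasSum (fun p => w * f p) (w * s) := by
  rw [hasSum_iff_coeff] at hf ⊢
  intro d
  have hc : ∀ x : MvPowerSeries (Fin 3) ℚ,
      coeff d (w * x) = ∑ uv ∈ Finset.HasAntidiagonal.antidiagonal d, coeff uv.1 w * coeff uv.2 x :=
    fun x => coeff_mul (n := d) (φ := w) (ψ := x)
  simp only [hc]
  exact hasSum_sum (fun uv _ => (hf uv.2).mul_left _)

lemma X0X2_mul_S (a b c : P4 → ℕ) (hG : G a b) :
    X 0 * X 2 * S a b c = S (fun p => a p + 1) b (fun p => c p + 1) := by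
  have h := hasSum_mul_left (X 0 * X 2) (summable_T a b c hG).hasSum
  rw [show (∑' p, T a b c p) = S a b c from rfl] at h
  calc X 0 * X 2 * S a b c = ∑' p, X 0 * X 2 * T a b c p := h.tsum_eq.symm
  _ = S (fun p => a p + 1) b (fun p => c p + 1) :=
      tsum_congr (fun p => by simp only [T]; ring)

lemma coeff_S_zero (a b c : P4 → ℕ) (hG : G a b) (d : Fin 3 →₀ ℕ)
    (hb : ∀ p : P4, d 1 < b p) : coeff d (S a b c) = 0 := by
  rw [S, coeff_tsum (summable_T a b c hG) d,
    tsum_congr (fun p => coeff_T_zero a b c p d (Or.inr (hb p)))]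
  exact tsum_zero

lemma main (m : ℕ) :
    S (fa 0) (fb 0) (fc 0 0 0 0 0) =
      S (fa 0) (fb 0) (fc 0 2 1 1 0) + S (fa 1) (fb 0) (fc 0 4 2 2 1)
      + (S (fa (m+1)) (fb (m+1)) (fc (4*m+4) (8*m+8) (6*m+6) (3*m+4) (3*m^2+6*m+3))
         - S (fa (m+1)) (fb (m+1)) (fc (4*m+4) (8*m+10) (6*m+7) (3*m+4) (3*m^2+6*m+3)))
      - (S (fa (m+2)) (fb (m+1)) (fc (4*m+4) (8*m+12) (6*m+8) (3*m+5) (3*m^2+8*m+6))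
         - S (fa (m+2)) (fb (m+1)) (fc (4*m+6) (8*m+12) (6*m+9) (3*m+5) (3*m^2+8*m+6))) := by
  induction m with
  | zero =>
      have b1 := STEP_L 0 0 0 0 0 0 0
      have b2 := STEP_K 0 0 0 0 0 1 0
      have b3 := STEP_J 0 0 0 0 1 1 0
      have b4 := STEP_K 1 0 0 4 2 2 1
      have b5 := STEP_I 1 0 0 4 3 2 1
      norm_num at b1 b2 b3 b4 b5 ⊢
      linear_combination b1 + b2 + b3 - b4 - b5
  | succ m ih =>
      have s1 := STEP_K (m+1) (m+1) (4*m+4) (8*m+8) (6*m+6) (3*m+4) (3*m^2+6*m+3)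
      have s2 := STEP_J (m+1) (m+1) (4*m+4) (8*m+8) (6*m+7) (3*m+4) (3*m^2+6*m+3)
      have s3 := STEP_K (m+2) (m+1) (4*m+4) (8*m+12) (6*m+8) (3*m+5) (3*m^2+8*m+6)
      have s4 := STEP_I (m+2) (m+1) (4*m+4) (8*m+12) (6*m+9) (3*m+5) (3*m^2+8*m+6)
      -- bridges
      have e1 : S (fa (m+1)) (fb (m+1)) (fc (4*m+4) (8*m+8) (6*m+6+1) (3*m+4) (3*m^2+6*m+3))
          = S (fa (m+1)) (fb (m+1)) (fc (4*m+4) (8*m+8) (6*m+7) (3*m+4) (3*m^2+6*m+3)) :=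
        S_ext rfl rfl (by ring) (by ring) (by ring) (by ring) (by ring)
      have e2 : S (fa (m+1)) (fb (m+1)) (fc (4*m+4) (8*m+8+2) (6*m+7) (3*m+4) (3*m^2+6*m+3))
          = S (fa (m+1)) (fb (m+1)) (fc (4*m+4) (8*m+10) (6*m+7) (3*m+4) (3*m^2+6*m+3)) :=
        S_ext rfl rfl (by ring) (by ring) (by ring) (by ring) (by ring)
      have e3 : S (fa (m+1+2)) (fb (m+1+1)) (fc (4*m+4+6) (8*m+8+12) (6*m+7+8) (3*m+4+4)
            (3*m^2+6*m+3+(8*m+8)+6))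
          = S (fa (m+1+2)) (fb (m+1+1)) (fc (4*(m+1)+6) (8*(m+1)+12) (6*(m+1)+9) (3*(m+1)+5)
            (3*(m+1)^2+8*(m+1)+6)) :=
        S_ext rfl rfl (by ring) (by ring) (by ring) (by ring) (by ring)
      have e4 : S (fa (m+1+1)) (fb (m+1+1)) (fc (4*m+4+4) (8*m+8+8) (6*m+6+6) (3*m+4+3)
            (3*m^2+6*m+3+(6*m+6)+3))
          = S (fa (m+1+1)) (fb (m+1+1)) (fc (4*(m+1)+4) (8*(m+1)+8) (6*(m+1)+6) (3*(m+1)+4)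
            (3*(m+1)^2+6*(m+1)+3)) :=
        S_ext rfl rfl (by ring) (by ring) (by ring) (by ring) (by ring)
      have e5 : S (fa (m+2)) (fb (m+1)) (fc (4*m+4) (8*m+12) (6*m+8+1) (3*m+5) (3*m^2+8*m+6))
          = S (fa (m+2)) (fb (m+1)) (fc (4*m+4) (8*m+12) (6*m+9) (3*m+5) (3*m^2+8*m+6)) :=
        S_ext rfl rfl (by ring) (by ring) (by ring) (by ring) (by ring)
      have e6 : S (fa (m+2+1)) (fb (m+1+1)) (fc (4*m+4+4) (8*m+12+8) (6*m+8+6) (3*m+5+3)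
            (3*m^2+8*m+6+(6*m+8)+3))
          = S (fa (m+1+2)) (fb (m+1+1)) (fc (4*(m+1)+4) (8*(m+1)+12) (6*(m+1)+8) (3*(m+1)+5)
            (3*(m+1)^2+8*(m+1)+6)) :=
        S_ext (by ring) rfl (by ring) (by ring) (by ring) (by ring) (by ring)
      have e7 : S (fa (m+2)) (fb (m+1)) (fc (4*m+4+2) (8*m+12) (6*m+9) (3*m+5) (3*m^2+8*m+6))
          = S (fa (m+2)) (fb (m+1)) (fc (4*m+6) (8*m+12) (6*m+9) (3*m+5) (3*m^2+8*m+6)) :=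
        S_ext rfl rfl (by ring) (by ring) (by ring) (by ring) (by ring)
      have e8 : S (fa (m+2)) (fb (m+1+1)) (fc (4*m+4+4) (8*m+12+6) (6*m+9+4) (3*m+5+2)
            (3*m^2+8*m+6+(4*m+4)+2))
          = S (fa (m+1+1)) (fb (m+1+1)) (fc (4*(m+1)+4) (8*(m+1)+10) (6*(m+1)+7) (3*(m+1)+4)
            (3*(m+1)^2+6*(m+1)+3)) :=
        S_ext (by ring) rfl (by ring) (by ring) (by ring) (by ring) (by ring)
      rw [e1, e4] at s1
      rw [e2, e3] at s2
      rw [e5, e6] at s3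
      rw [e7, e8] at s4
      linear_combination ih + s1 + s2 - s3 - s4

/-- The functional equation `R(x,y,q) = R(xq,y,q) + xq·R(xq²,y,q)`. -/
theorem R_functional_equation :
    R (X 0) (X 1) =
      R (X 0 * X 2) (X 1) + X 0 * X 2 * R (X 0 * (X 2) ^ 2) (X 1) := by
  have hR1 : R (X 0) (X 1) = S (fa 0) (fb 0) (fc 0 0 0 0 0) := by
    simp only [R, S]
    exact tsum_congr (fun p => by simp only [T, fa, fb, fc, Dden]; ring)
  have hR2 : R (X 0 * X 2) (X 1) = S (fa 0) (fb 0) (fc 0 2 1 1 0) := by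
    simp only [R, S]
    exact tsum_congr (fun p => by simp only [T, fa, fb, fc, Dden]; rw [mul_pow]; ring)
  have hR3 : X 0 * X 2 * R (X 0 * (X 2) ^ 2) (X 1) = S (fa 1) (fb 0) (fc 0 4 2 2 1) := by
    have h0 : R (X 0 * (X 2) ^ 2) (X 1) = S (fa 0) (fb 0) (fc 0 4 2 2 0) := by
      simp only [R, S]
      exact tsum_congr (fun p => by
        simp only [T, fa, fb, fc, Dden]; rw [mul_pow, ← pow_mul]; ring)
    rw [h0, X0X2_mul_S _ _ _ (hGfab 0 0)]
    apply S_congr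
    · intro p; simp only [fa]
    · intro p; rfl
    · intro p; simp only [fc]
  rw [hR1, hR2, hR3]
  apply MvPowerSeries.ext; intro d
  have hm := main (d 1)
  have congrM := congrArg (coeff d) hm
  have z1 := coeff_S_zero (fa (d 1+1)) (fb (d 1+1))
    (fc (4*(d 1)+4) (8*(d 1)+8) (6*(d 1)+6) (3*(d 1)+4) (3*(d 1)^2+6*(d 1)+3))
    (hGfab _ _) d (fun p => by simp only [fb]; omega)
  have z2 := coeff_S_zero (fa (d 1+1)) (fb (d 1+1))
    (fc (4*(d 1)+4) (8*(d 1)+10) (6*(d 1)+7) (3*(d 1)+4) (3*(d 1)^2+6*(d 1)+3))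
    (hGfab _ _) d (fun p => by simp only [fb]; omega)
  have z3 := coeff_S_zero (fa (d 1+2)) (fb (d 1+1))
    (fc (4*(d 1)+4) (8*(d 1)+12) (6*(d 1)+8) (3*(d 1)+5) (3*(d 1)^2+8*(d 1)+6))
    (hGfab _ _) d (fun p => by simp only [fb]; omega)
  have z4 := coeff_S_zero (fa (d 1+2)) (fb (d 1+1))
    (fc (4*(d 1)+6) (8*(d 1)+12) (6*(d 1)+9) (3*(d 1)+5) (3*(d 1)^2+8*(d 1)+6))
    (hGfab _ _) d (fun p => by simp only [fb]; omega)
  simp only [map_add, map_sub] at congrM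
  rw [z1, z2, z3, z4] at congrM
  rw [map_add]
  linarith [congrM]
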